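/- In a block graph G, a vertex v is an inner vertex of some Steiner tree for a k-set S ⊆ V(G)∖{v} if and only if v is a cut vertex of G and the vertices of S do not all lie in a single connected component of G∖v; moreover in that case v is an inner vertex of every Steiner tree for S. -/

import Mathlib

open SimpleGraph Finset
open scoped Classical

/-- The Steiner distance of a vertex set `S` in `G`: the minimum number of edges of a
connected subgraph of `G` whose vertex set contains `S`. -/
noncomputable def steinerDist {V : Type*} (G : SimpleGraph V) (S : Set V) : ℕ :=
  sInf {m | ∃ H : G.Subgraph, H.Connected ∧ S ⊆ H.verts ∧ H.edgeSet.ncard = m}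

/-- The Steiner `k`-Wiener index: the sum of Steiner distances over all `k`-element
vertex subsets. -/
noncomputable def steinerWiener {V : Type*} [Fintype V] (G : SimpleGraph V) (k : ℕ) : ℕ :=
  ∑ S ∈ Finset.powersetCard k (Finset.univ : Finset V), steinerDist G (↑S : Set V)

/-- `v` is a cut vertex of `G`: `G` is connected but deleting `v` disconnects it. -/
def IsCutVertex {V : Type*} (G : SimpleGraph V) (v : V) : Prop :=
  G.Connected ∧ ¬ (G.induce {u | u ≠ v}).Connected

/-- The induced subgraph on `B` is connected and has no cut vertex. -/
def IsBiconnectedSet {V : Type*} (G : SimpleGraph V) (B : Set V) : Prop :=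
  (G.induce B).Connected ∧
    ∀ v ∈ B, (B \ {v}).Nonempty → (G.induce (B \ {v})).Connected

/-- `B` is a block of `G`: a maximal set inducing a connected subgraph without cut
vertex (with at least two vertices). -/
def IsBlock {V : Type*} (G : SimpleGraph V) (B : Set V) : Prop :=
  2 ≤ B.ncard ∧ IsBiconnectedSet G B ∧
    ∀ B' : Set V, B ⊆ B' → 2 ≤ B'.ncard → IsBiconnectedSet G B' → B' = B

/-- A block graph: a connected graph in which every block is a clique. -/
def IsBlockGraph {V : Type*} (G : SimpleGraph V) : Prop :=
  G.Connected ∧ ∀ B : Set V, IsBlock G B → G.IsClique B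


section StmtNineAux
variable {V : Type*}


lemma aux_induce_reach {G : SimpleGraph V} {B : Set V} :
    ∀ {a b : V} (p : G.Walk a b), (∀ z ∈ p.support, z ∈ B) →
      ∀ (ha : a ∈ B) (hb : b ∈ B), (G.induce B).Reachable ⟨a, ha⟩ ⟨b, hb⟩ := by
  intro a b p
  induction p with
  | nil => intro _ ha hb; exact Reachable.refl _
  | @cons u c d h q ih =>
    intro hsup ha hb
    have hc : c ∈ B := hsup c (by simp [SimpleGraph.Walk.support_cons])
    have h1 : (G.induce B).Adj ⟨u, ha⟩ ⟨c, hc⟩ := h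
    exact (h1.reachable).trans (ih (fun z hz => hsup z (by simp [SimpleGraph.Walk.support_cons, hz])) hc hb)

lemma aux_avoid {G : SimpleGraph V} {v : V} :
    ∀ {a b : V} (p : (G.deleteEdges {e | v ∈ e}).Walk a b), a ≠ v → v ∉ p.support := by
  intro a b p
  induction p with
  | nil => intro h; simpa using h.symm
  | @cons u c d h q ih =>
    intro hne
    have h' := (SimpleGraph.deleteEdges_adj).mp h
    have hc : c ≠ v := fun hcv => h'.2 (show v ∈ s(u,c) from hcv ▸ Sym2.mem_mk_right u c)
    simp only [SimpleGraph.Walk.support_cons, List.mem_cons]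
    rintro (rfl | hmem)
    · exact hne rfl
    · exact ih hc hmem

lemma coe_reach {G : SimpleGraph V} {H : G.Subgraph} {a b : ↥H.verts}
    (h : H.coe.Reachable a b) (K : SimpleGraph V)
    (hK : ∀ x y : ↥H.verts, H.Adj x.1 y.1 → K.Adj x.1 y.1) : K.Reachable a.1 b.1 := by
  obtain ⟨p⟩ := h
  induction p with
  | nil => exact Reachable.refl _
  | @cons u c d h q ih => exact (hK u c h).reachable.trans ih

lemma induce_reach_mono {G : SimpleGraph V} {s : Set V} {a b : ↥s}
    (h : (G.induce s).Reachable a b) (K : SimpleGraph V)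
    (hK : ∀ x y : ↥s, G.Adj x.1 y.1 → K.Adj x.1 y.1) : K.Reachable a.1 b.1 := by
  obtain ⟨p⟩ := h
  induction p with
  | nil => exact Reachable.refl _
  | @cons u c d h q ih => exact (hK u c h).reachable.trans ih

lemma exists_block_superset [Fintype V] (G : SimpleGraph V) (B₀ : Set V)
    (h2 : 2 ≤ B₀.ncard) (hb : IsBiconnectedSet G B₀) :
    ∃ B : Set V, B₀ ⊆ B ∧ IsBlock G B := by
  classical
  set P : Finset V → Prop := fun F => B₀ ⊆ ↑F ∧ 2 ≤ (F : Set V).ncard ∧ IsBiconnectedSet G ↑F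
    with hP
  have hne : (Finset.univ.filter P).Nonempty := by
    refine ⟨B₀.toFinset, ?_⟩
    simp only [Finset.mem_filter, Finset.mem_univ, true_and, hP]
    rw [Set.coe_toFinset]
    exact ⟨subset_rfl, h2, hb⟩
  obtain ⟨F, hF, hmax⟩ := Finset.exists_max_image (Finset.univ.filter P) Finset.card hne
  simp only [Finset.mem_filter, Finset.mem_univ, true_and, hP] at hF
  refine ⟨↑F, hF.1, hF.2.1, hF.2.2, ?_⟩
  intro B' hsub h2' hb'
  have hB'fin : B'.Finite := Set.toFinite _
  have hmem : B'.toFinset ∈ Finset.univ.filter P := by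
    simp only [Finset.mem_filter, Finset.mem_univ, true_and, hP]
    rw [Set.coe_toFinset]
    exact ⟨hF.1.trans hsub, h2', hb'⟩
  have hcard := hmax _ hmem
  have : B'.ncard ≤ (F : Set V).ncard := by
    rwa [Set.ncard_coe_finset, Set.ncard_eq_toFinset_card' B']
  exact (Set.eq_of_subset_of_ncard_le hsub this hB'fin).symm

lemma conn_of_target {G : SimpleGraph V} (B : Set V) (t : V) (ht : t ∈ B)
    (hreach : ∀ z, ∀ hz : z ∈ B, (G.induce B).Reachable ⟨z, hz⟩ ⟨t, ht⟩) :
    (G.induce B).Connected := by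
  rw [connected_iff]
  refine ⟨fun a b => ?_, ⟨⟨t, ht⟩⟩⟩
  exact (hreach a.1 a.2).trans (hreach b.1 b.2).symm

lemma cycle_clique [Fintype V] {G : SimpleGraph V} (hbg : IsBlockGraph G) {v x y : V}
    (hvx : G.Adj v x) (hvy : G.Adj v y) (hxy : x ≠ y)
    (hr : (G.deleteEdges {e | v ∈ e}).Reachable x y) : G.Adj x y := by
  classical
  obtain ⟨p0⟩ := hr
  have hvp0 : v ∉ p0.support := aux_avoid p0 hvx.ne'
  have htrans : ∀ e ∈ p0.edges, e ∈ G.edgeSet := by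
    intro e he
    have h1 := p0.edges_subset_edgeSet he
    exact (SimpleGraph.edgeSet_subset_edgeSet.mpr (SimpleGraph.deleteEdges_le _)) h1
  set p1 : G.Walk x y := p0.transfer G htrans with hp1
  have hvp1 : v ∉ p1.support := by rwa [hp1, SimpleGraph.Walk.support_transfer]
  set p : G.Walk x y := (p1.toPath : G.Walk x y) with hpdef
  have hpath : p.IsPath := p1.toPath.2
  have hvp : v ∉ p.support := fun h => hvp1 (SimpleGraph.Walk.support_toPath_subset p1 h)
  set B₀ : Set V := insert v {z | z ∈ p.support} with hB₀
  have hxB : x ∈ B₀ := Or.inr p.start_mem_support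
  have hyB : y ∈ B₀ := Or.inr p.end_mem_support
  have hvB : v ∈ B₀ := Or.inl rfl
  have h2 : 2 ≤ B₀.ncard := by
    rw [show (2:ℕ) = 1 + 1 from rfl, ← Nat.lt_iff_add_one_le, Set.one_lt_ncard (Set.toFinite _)]
    exact ⟨v, hvB, x, hxB, hvx.ne⟩
  have hbicon : IsBiconnectedSet G B₀ := by
    constructor
    · refine conn_of_target B₀ v hvB ?_
      intro z hz
      rcases Set.mem_insert_iff.mp hz with rfl | hzs
      · refine aux_induce_reach SimpleGraph.Walk.nil ?_ hz hvB
        intro z' hz'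
        simp only [SimpleGraph.Walk.support_nil, List.mem_singleton] at hz'
        subst hz'; exact hvB
      · set r := (p.takeUntil z hzs).reverse.append
          (SimpleGraph.Walk.cons hvx.symm SimpleGraph.Walk.nil) with hrdef
        refine aux_induce_reach r ?_ hz hvB
        intro z' hz'
        rw [hrdef, SimpleGraph.Walk.mem_support_append_iff] at hz'
        rcases hz' with h1 | h2'
        · rw [SimpleGraph.Walk.support_reverse, List.mem_reverse] at h1
          exact Or.inr (p.support_takeUntil_subset hzs h1)
        · simp only [SimpleGraph.Walk.support_cons, SimpleGraph.Walk.support_nil,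
            List.mem_cons, List.mem_singleton] at h2'
          rcases h2' with rfl | h2'
          · exact hxB
          · rcases h2' with rfl | h2'
            · exact hvB
            · cases h2'
    · intro w hwB _hne
      by_cases hwv : w = v
      · subst hwv
        have hxd : x ∈ B₀ \ {w} := ⟨hxB, by simpa using hvx.ne'⟩
        refine conn_of_target _ x hxd ?_
        intro z hz
        have hzv : z ≠ w := by simpa using hz.2
        have hzs : z ∈ p.support := by
          rcases Set.mem_insert_iff.mp hz.1 with rfl | h
          · exact absurd rfl hzv
          · exact h
        refine aux_induce_reach (p.takeUntil z hzs).reverse ?_ hz hxd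
        intro z' hz'
        rw [SimpleGraph.Walk.support_reverse, List.mem_reverse] at hz'
        have hz'p := p.support_takeUntil_subset hzs hz'
        exact ⟨Or.inr hz'p, fun hh => hvp ((Set.mem_singleton_iff.mp hh) ▸ hz'p)⟩
      · have hvd : v ∈ B₀ \ {w} := ⟨hvB, fun hh => hwv (Set.mem_singleton_iff.mp hh).symm⟩
        refine conn_of_target _ v hvd ?_
        intro z hz
        have hzw : z ≠ w := by simpa using hz.2
        rcases Set.mem_insert_iff.mp hz.1 with rfl | hzs
        · refine aux_induce_reach SimpleGraph.Walk.nil ?_ hz hvd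
          intro z' hz'
          simp only [SimpleGraph.Walk.support_nil, List.mem_singleton] at hz'
          subst hz'; exact hvd
        · by_cases hwq : w ∈ (p.takeUntil z hzs).support
          · -- w is on the x-side; use dropUntil to y then edge to v
            have hwr : w ∉ (p.dropUntil z hzs).support.tail := by
              intro hwr
              have hnd := hpath.support_nodup
              rw [← p.take_spec hzs, SimpleGraph.Walk.support_append] at hnd
              exact (List.disjoint_of_nodup_append hnd) hwq hwr
            have hwr' : w ∉ (p.dropUntil z hzs).support := by
              rw [SimpleGraph.Walk.support_eq_cons]
              simp only [List.mem_cons, not_or]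
              exact ⟨fun h => hzw h.symm, hwr⟩
            set r := (p.dropUntil z hzs).append
              (SimpleGraph.Walk.cons hvy.symm SimpleGraph.Walk.nil) with hrdef
            refine aux_induce_reach r ?_ hz hvd
            intro z' hz'
            rw [hrdef, SimpleGraph.Walk.mem_support_append_iff] at hz'
            rcases hz' with h1 | h2'
            · exact ⟨Or.inr (p.support_dropUntil_subset hzs h1),
                fun hh => hwr' ((Set.mem_singleton_iff.mp hh) ▸ h1)⟩
            · simp only [SimpleGraph.Walk.support_cons, SimpleGraph.Walk.support_nil,
                List.mem_cons, List.mem_singleton] at h2'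
              rcases h2' with rfl | h2'
              · exact ⟨hyB, fun hh => hwr' ((Set.mem_singleton_iff.mp hh) ▸ (p.dropUntil z hzs).end_mem_support)⟩
              · rcases h2' with rfl | h2'
                · exact hvd
                · cases h2'
          · set r := (p.takeUntil z hzs).reverse.append
              (SimpleGraph.Walk.cons hvx.symm SimpleGraph.Walk.nil) with hrdef
            refine aux_induce_reach r ?_ hz hvd
            intro z' hz'
            rw [hrdef, SimpleGraph.Walk.mem_support_append_iff] at hz'
            rcases hz' with h1 | h2'
            · rw [SimpleGraph.Walk.support_reverse, List.mem_reverse] at h1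
              exact ⟨Or.inr (p.support_takeUntil_subset hzs h1),
                fun hh => hwq ((Set.mem_singleton_iff.mp hh) ▸ h1)⟩
            · simp only [SimpleGraph.Walk.support_cons, SimpleGraph.Walk.support_nil,
                List.mem_cons, List.mem_singleton] at h2'
              rcases h2' with rfl | h2'
              · exact ⟨hxB, fun hh => hwq ((Set.mem_singleton_iff.mp hh) ▸ (p.takeUntil z hzs).start_mem_support)⟩
              · rcases h2' with rfl | h2'
                · exact hvd
                · cases h2'
  obtain ⟨B, hsubB, hblock⟩ := exists_block_superset G B₀ h2 hbicon
  exact hbg.2 B hblock (hsubB hxB) (hsubB hyB) hxy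

lemma not_mem_min [Fintype V] {G : SimpleGraph V} (hbg : IsBlockGraph G) (S : Finset V)
    (v : V) (hv : v ∉ S) (hS : S.Nonempty)
    (hall : ∀ a ∈ S, ∀ b ∈ S, (G.deleteEdges {e | v ∈ e}).Reachable a b)
    (H : G.Subgraph) (hc : H.Connected) (hsub : ↑S ⊆ H.verts)
    (hmin : H.edgeSet.ncard = steinerDist G ↑S) : v ∉ H.verts := by
  classical
  intro hvH
  set Gv := G.deleteEdges {e | v ∈ e} with hGv
  set d := H.edgeSet.ncard with hd
  -- the auxiliary graph K : H minus v
  set K : SimpleGraph V := {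
    Adj := fun a b => H.Adj a b ∧ a ≠ v ∧ b ≠ v
    symm := ⟨by rintro a b ⟨h1, h2, h3⟩; exact ⟨h1.symm, h3, h2⟩⟩
    loopless := ⟨fun a h => (H.adj_sub h.1).ne rfl⟩ } with hK
  have hKle : K ≤ Gv := by
    rintro a b ⟨h1, h2, h3⟩
    refine (SimpleGraph.deleteEdges_adj).mpr ⟨H.adj_sub h1, ?_⟩
    intro hh
    rcases Sym2.mem_iff.mp hh with rfl | rfl
    · exact h2 rfl
    · exact h3 rfl
  -- Step A : every vertex of H other than v can K-reach some element of S
  have stepA : ∀ u ∈ H.verts, u ≠ v → ∃ s ∈ S, K.Reachable u s := by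
    by_contra hcon
    push_neg at hcon
    obtain ⟨u₀, hu₀H, hu₀v, hu₀⟩ := hcon
    set C : Set V := {u | u ∈ H.verts ∧ u ≠ v ∧ ∀ s ∈ S, ¬K.Reachable u s} with hC
    have hu₀C : u₀ ∈ C := ⟨hu₀H, hu₀v, hu₀⟩
    have hvC : v ∉ C := fun h => h.2.1 rfl
    have hSC : ∀ s ∈ S, s ∉ C := fun s hs hsC => hsC.2.2 s hs (Reachable.refl s)
    set H₂ : G.Subgraph := {
      verts := H.verts \ C
      Adj := fun a b => H.Adj a b ∧ a ∉ C ∧ b ∉ C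
      adj_sub := fun h => H.adj_sub h.1
      edge_vert := fun h => ⟨H.edge_vert h.1, h.2.1⟩
      symm := ⟨by rintro a b ⟨h1, h2, h3⟩; exact ⟨h1.symm, h3, h2⟩⟩ } with hH₂
    have hvH₂ : v ∈ H₂.verts := ⟨hvH, hvC⟩
    have key : ∀ (aa bb : ↥H.verts) (p : H.coe.Walk aa bb), bb.1 = v → (haC : aa.1 ∉ C) →
        H₂.coe.Reachable ⟨aa.1, aa.2, haC⟩ ⟨v, hvH₂⟩ := by
      intro aa bb p
      induction p with
      | @nil u₁ =>
        intro hb haC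
        have : (⟨u₁.1, u₁.2, haC⟩ : ↥H₂.verts) = ⟨v, hvH₂⟩ := Subtype.ext hb
        rw [this]
      | @cons u₁ c₁ b₁ h q ih =>
        intro hb haC
        by_cases hav : u₁.1 = v
        · have : (⟨u₁.1, u₁.2, haC⟩ : ↥H₂.verts) = ⟨v, hvH₂⟩ := Subtype.ext hav
          rw [this]
        · by_cases hcv : c₁.1 = v
          · have hadj : H₂.coe.Adj ⟨u₁.1, u₁.2, haC⟩ ⟨v, hvH₂⟩ := ⟨hcv ▸ (show H.Adj u₁.1 c₁.1 from h), haC, hvC⟩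
            exact hadj.reachable
          · have hc₁C : c₁.1 ∉ C := by
              have hne : ∃ s ∈ S, K.Reachable u₁.1 s := by
                by_contra hno
                push_neg at hno
                exact haC ⟨u₁.2, hav, hno⟩
              obtain ⟨s, hs, hreach⟩ := hne
              have hKadj : K.Adj c₁.1 u₁.1 := ⟨h.symm, hcv, hav⟩
              exact fun hcC => hcC.2.2 s hs (hKadj.reachable.trans hreach)
            have hadj : H₂.coe.Adj ⟨u₁.1, u₁.2, haC⟩ ⟨c₁.1, c₁.2, hc₁C⟩ := ⟨h, haC, hc₁C⟩
            exact hadj.reachable.trans (ih hb hc₁C)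
    have hconn₂ : H₂.Connected := by
      rw [SimpleGraph.Subgraph.connected_iff]
      constructor
      · constructor
        intro a b
        have ra : H₂.coe.Reachable a ⟨v, hvH₂⟩ := by
          obtain ⟨p⟩ := hc ⟨a.1, a.2.1⟩ ⟨v, hvH⟩
          have := key ⟨a.1, a.2.1⟩ ⟨v, hvH⟩ p rfl a.2.2
          convert this using 2
        have rb : H₂.coe.Reachable b ⟨v, hvH₂⟩ := by
          obtain ⟨p⟩ := hc ⟨b.1, b.2.1⟩ ⟨v, hvH⟩
          have := key ⟨b.1, b.2.1⟩ ⟨v, hvH⟩ p rfl b.2.2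
          convert this using 2
        exact ra.trans rb.symm
      · exact ⟨v, hvH₂⟩
    have hsub₂ : ↑S ⊆ H₂.verts := fun s hs => ⟨hsub hs, hSC s hs⟩
    have hss : H₂.edgeSet ⊆ H.edgeSet := by
      intro e
      refine Sym2.ind (fun a b he => ?_) e
      exact SimpleGraph.Subgraph.mem_edgeSet.mpr (SimpleGraph.Subgraph.mem_edgeSet.mp he).1
    -- find an H-edge at u₀ which is not an H₂-edge
    obtain ⟨p⟩ := hc ⟨u₀, hu₀H⟩ ⟨v, hvH⟩
    have hedge : ∃ w : V, H.Adj u₀ w := by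
      cases p with
      | nil => exact absurd rfl hu₀v
      | cons h q => exact ⟨_, h⟩
    obtain ⟨w, hw⟩ := hedge
    have hmem : s(u₀, w) ∈ H.edgeSet := SimpleGraph.Subgraph.mem_edgeSet.mpr hw
    have hnmem : s(u₀, w) ∉ H₂.edgeSet := fun hh =>
      (SimpleGraph.Subgraph.mem_edgeSet.mp hh).2.1 hu₀C
    have hlt : H₂.edgeSet.ncard < d := by
      apply Set.ncard_lt_ncard _ (Set.toFinite _)
      rw [Set.ssubset_iff_of_subset hss]
      exact ⟨_, hmem, hnmem⟩
    have hle : steinerDist G ↑S ≤ H₂.edgeSet.ncard :=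
      Nat.sInf_le ⟨H₂, hconn₂, hsub₂, rfl⟩
    omega
  -- Step B : the neighbours of v in H
  set N : Set V := {x | H.Adj v x} with hN
  have hNsub : ∀ x ∈ N, x ∈ H.verts ∧ x ≠ v :=
    fun x hx => ⟨H.edge_vert hx.symm, (H.adj_sub hx).ne'⟩
  obtain ⟨s₀, hs₀⟩ := hS
  have hs₀H : s₀ ∈ H.verts := hsub hs₀
  have hs₀v : s₀ ≠ v := fun h => hv (h ▸ hs₀)
  have hx₀ : ∃ x₀, x₀ ∈ N := by
    obtain ⟨p⟩ := hc ⟨v, hvH⟩ ⟨s₀, hs₀H⟩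
    cases p with
    | nil => exact absurd rfl hs₀v.symm
    | cons h q => exact ⟨_, h⟩
  obtain ⟨x₀, hx₀N⟩ := hx₀
  -- neighbours of v in H are pairwise adjacent in G
  have hclique : ∀ x ∈ N, ∀ y ∈ N, x ≠ y → G.Adj x y := by
    intro x hx y hy hne
    obtain ⟨sx, hsx, hrx⟩ := stepA x (hNsub x hx).1 (hNsub x hx).2
    obtain ⟨sy, hsy, hry⟩ := stepA y (hNsub y hy).1 (hNsub y hy).2
    have hGv : Gv.Reachable x y :=
      ((hrx.mono hKle).trans (hall sx hsx sy hsy)).trans (hry.mono hKle).symm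
    exact cycle_clique hbg (H.adj_sub hx) (H.adj_sub hy) hne hGv
  -- the replacement subgraph
  set H₃ : G.Subgraph := {
    verts := H.verts \ {v}
    Adj := fun a b => (H.Adj a b ∧ a ≠ v ∧ b ≠ v) ∨
      ((a = x₀ ∧ b ∈ N ∧ b ≠ x₀) ∨ (b = x₀ ∧ a ∈ N ∧ a ≠ x₀))
    adj_sub := by
      rintro a b (⟨h1, _, _⟩ | ⟨rfl, hbN, hbne⟩ | ⟨rfl, haN, hane⟩)
      · exact H.adj_sub h1
      · exact hclique _ hx₀N _ hbN (Ne.symm hbne)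
      · exact (hclique _ hx₀N _ haN (Ne.symm hane)).symm
    edge_vert := by
      rintro a b (⟨h1, h2, _⟩ | ⟨rfl, hbN, hbne⟩ | ⟨rfl, haN, hane⟩)
      · exact ⟨H.edge_vert h1, h2⟩
      · exact ⟨(hNsub _ hx₀N).1, (hNsub _ hx₀N).2⟩
      · exact ⟨(hNsub _ haN).1, (hNsub _ haN).2⟩
    symm := ⟨by
      rintro a b (⟨h1, h2, h3⟩ | ⟨rfl, hbN, hbne⟩ | ⟨rfl, haN, hane⟩)
      · exact Or.inl ⟨h1.symm, h3, h2⟩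
      · exact Or.inr (Or.inr ⟨rfl, hbN, hbne⟩)
      · exact Or.inr (Or.inl ⟨rfl, haN, hane⟩)⟩ } with hH₃
  have hx₀H₃ : x₀ ∈ H₃.verts := ⟨(hNsub _ hx₀N).1, (hNsub _ hx₀N).2⟩
  -- connectivity of H₃
  have key3 : ∀ (aa bb : ↥H.verts) (p : H.coe.Walk aa bb), bb.1 = v → (ha : aa.1 ≠ v) →
      H₃.coe.Reachable ⟨aa.1, aa.2, ha⟩ ⟨x₀, hx₀H₃⟩ := by
    intro aa bb p
    induction p with
    | nil => intro hb ha; exact absurd hb ha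
    | @cons u₁ c₁ b₁ h q ih =>
      intro hb ha
      by_cases hcv : c₁.1 = v
      · have haN : u₁.1 ∈ N := show H.Adj v u₁.1 from hcv ▸ (show H.Adj u₁.1 c₁.1 from h).symm
        by_cases hax : u₁.1 = x₀
        · have : (⟨u₁.1, u₁.2, ha⟩ : ↥H₃.verts) = ⟨x₀, hx₀H₃⟩ := Subtype.ext hax
          rw [this]
        · have hadj : H₃.coe.Adj ⟨u₁.1, u₁.2, ha⟩ ⟨x₀, hx₀H₃⟩ :=
            Or.inr (Or.inr ⟨rfl, haN, hax⟩)
          exact hadj.reachable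
      · have hadj : H₃.coe.Adj ⟨u₁.1, u₁.2, ha⟩ ⟨c₁.1, c₁.2, hcv⟩ := Or.inl ⟨h, ha, hcv⟩
        exact hadj.reachable.trans (ih hb hcv)
  have hconn₃ : H₃.Connected := by
    rw [SimpleGraph.Subgraph.connected_iff]
    constructor
    · constructor
      intro a b
      have ra : H₃.coe.Reachable a ⟨x₀, hx₀H₃⟩ := by
        obtain ⟨p⟩ := hc ⟨a.1, a.2.1⟩ ⟨v, hvH⟩
        have := key3 ⟨a.1, a.2.1⟩ ⟨v, hvH⟩ p rfl a.2.2
        convert this using 2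
      have rb : H₃.coe.Reachable b ⟨x₀, hx₀H₃⟩ := by
        obtain ⟨p⟩ := hc ⟨b.1, b.2.1⟩ ⟨v, hvH⟩
        have := key3 ⟨b.1, b.2.1⟩ ⟨v, hvH⟩ p rfl b.2.2
        convert this using 2
      exact ra.trans rb.symm
    · exact ⟨x₀, hx₀H₃⟩
  have hsub₃ : ↑S ⊆ H₃.verts := fun s hs =>
    ⟨hsub hs, fun hh => hv ((Set.mem_singleton_iff.mp hh) ▸ hs)⟩
  -- edge counting
  set Ev : Set (Sym2 V) := (fun x => s(v, x)) '' N with hEv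
  set Star : Set (Sym2 V) := (fun x => s(x₀, x)) '' (N \ {x₀}) with hStar
  have hEvsub : Ev ⊆ H.edgeSet := by
    rintro e ⟨x, hxN, rfl⟩
    exact SimpleGraph.Subgraph.mem_edgeSet.mpr hxN
  have hsplit : H₃.edgeSet ⊆ (H.edgeSet \ Ev) ∪ Star := by
    intro e
    refine Sym2.ind (fun a b he => ?_) e
    rcases SimpleGraph.Subgraph.mem_edgeSet.mp he with ⟨h1, h2, h3⟩ | ⟨rfl, hbN, hbne⟩ |
      ⟨rfl, haN, hane⟩
    · refine Or.inl ⟨SimpleGraph.Subgraph.mem_edgeSet.mpr h1, ?_⟩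
      rintro ⟨x, hxN, heq⟩
      have hvmem : v ∈ s(a, b) := heq ▸ Sym2.mem_mk_left v x
      rcases Sym2.mem_iff.mp hvmem with rfl | rfl
      · exact h2 rfl
      · exact h3 rfl
    · exact Or.inr ⟨b, ⟨hbN, hbne⟩, rfl⟩
    · exact Or.inr ⟨a, ⟨haN, hane⟩, Sym2.eq_swap⟩
  have hEvcard : Ev.ncard = N.ncard := by
    apply Set.ncard_image_of_injOn
    intro x _ y _ hxy
    exact (Sym2.congr_right).mp hxy
  have hNpos : 1 ≤ N.ncard := by
    rw [Nat.one_le_iff_ne_zero]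
    intro h0
    rw [Set.ncard_eq_zero (Set.toFinite _)] at h0
    exact absurd hx₀N (h0 ▸ Set.notMem_empty x₀)
  have hEvd : Ev.ncard ≤ d := Set.ncard_le_ncard hEvsub (Set.toFinite _)
  have hdiffcard : (H.edgeSet \ Ev).ncard = d - N.ncard := by
    rw [Set.ncard_diff hEvsub (Set.toFinite _), hEvcard]
  have hStarcard : Star.ncard ≤ N.ncard - 1 := by
    calc Star.ncard ≤ (N \ {x₀}).ncard := Set.ncard_image_le (Set.toFinite _)
    _ = N.ncard - 1 := Set.ncard_diff_singleton_of_mem hx₀N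
  have h₃card : H₃.edgeSet.ncard ≤ d - 1 := by
    calc H₃.edgeSet.ncard ≤ ((H.edgeSet \ Ev) ∪ Star).ncard :=
          Set.ncard_le_ncard hsplit (Set.toFinite _)
    _ ≤ (H.edgeSet \ Ev).ncard + Star.ncard := Set.ncard_union_le _ _
    _ ≤ (d - N.ncard) + (N.ncard - 1) := by rw [hdiffcard]; omega
    _ ≤ d - 1 := by omega
  have hle : steinerDist G ↑S ≤ H₃.edgeSet.ncard := Nat.sInf_le ⟨H₃, hconn₃, hsub₃, rfl⟩
  omega

end StmtNineAux

/-- In a block graph, a vertex v not in S is an inner vertex of some Steiner tree for S iff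
v is a cut vertex and S does not lie in a single component of G minus v; moreover, in that
case v is an inner vertex of every Steiner tree for S. -/
theorem stmt9 {V : Type*} [Fintype V] (G : SimpleGraph V) (hbg : IsBlockGraph G)
    (S : Finset V) (hS : S.Nonempty) (v : V) (hv : v ∉ S) :
    ((∃ H : G.Subgraph, H.Connected ∧ ↑S ⊆ H.verts ∧
        H.edgeSet.ncard = steinerDist G ↑S ∧ v ∈ H.verts) ↔
      (IsCutVertex G v ∧ ∃ a ∈ S, ∃ b ∈ S,
        ¬ (G.deleteEdges {e | v ∈ e}).Reachable a b))
    ∧ ((IsCutVertex G v ∧ ∃ a ∈ S, ∃ b ∈ S,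
          ¬ (G.deleteEdges {e | v ∈ e}).Reachable a b) →
        ∀ H : G.Subgraph, H.Connected → ↑S ⊆ H.verts →
          H.edgeSet.ncard = steinerDist G ↑S → v ∈ H.verts) := by
  classical
  have hGconn := hbg.1
  have part2 : (IsCutVertex G v ∧ ∃ a ∈ S, ∃ b ∈ S,
      ¬ (G.deleteEdges {e | v ∈ e}).Reachable a b) →
      ∀ H : G.Subgraph, H.Connected → ↑S ⊆ H.verts →
        H.edgeSet.ncard = steinerDist G ↑S → v ∈ H.verts := by
    rintro ⟨_, a, ha, b, hb, hab⟩ H hc hsubv _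
    by_contra hvH
    apply hab
    have hr := hc ⟨a, hsubv ha⟩ ⟨b, hsubv hb⟩
    refine coe_reach hr _ (fun x y hxy => (SimpleGraph.deleteEdges_adj).mpr
      ⟨H.adj_sub hxy, fun hh => ?_⟩)
    rcases Sym2.mem_iff.mp hh with h1 | h1
    · exact hvH (h1.symm ▸ x.2)
    · exact hvH (h1.symm ▸ y.2)
  refine ⟨⟨?_, ?_⟩, part2⟩
  · rintro ⟨H, hc, hsubv, hmin, hvH⟩
    have hsep : ∃ a ∈ S, ∃ b ∈ S, ¬ (G.deleteEdges {e | v ∈ e}).Reachable a b := by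
      by_contra hno
      push_neg at hno
      exact (not_mem_min hbg S v hv hS hno H hc hsubv hmin) hvH
    obtain ⟨a, ha, b, hb, hab⟩ := hsep
    refine ⟨⟨hGconn, ?_⟩, a, ha, b, hb, hab⟩
    intro hcon
    apply hab
    have hav : a ≠ v := fun h => hv (h ▸ ha)
    have hbv : b ≠ v := fun h => hv (h ▸ hb)
    have hr := hcon.preconnected ⟨a, hav⟩ ⟨b, hbv⟩
    refine induce_reach_mono hr _ (fun x y hxy => (SimpleGraph.deleteEdges_adj).mpr
      ⟨hxy, fun hh => ?_⟩)
    rcases Sym2.mem_iff.mp hh with h1 | h1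
    · exact x.2 h1.symm
    · exact y.2 h1.symm
  · rintro ⟨hcut, hsep⟩
    have htop : (⊤ : G.Subgraph).Connected :=
      SimpleGraph.Subgraph.connected_iff'.mpr
        ((SimpleGraph.Iso.connected_iff (SimpleGraph.Subgraph.topIso)).mpr hGconn)
    have hmem : steinerDist G ↑S ∈ {m | ∃ H : G.Subgraph, H.Connected ∧ (↑S : Set V) ⊆ H.verts ∧
        H.edgeSet.ncard = m} := Nat.sInf_mem ⟨_, ⊤, htop, fun x _ => trivial, rfl⟩
    obtain ⟨H, hc, hsubv, hmin⟩ := hmem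
    exact ⟨H, hc, hsubv, hmin, part2 ⟨hcut, hsep⟩ H hc hsubv hmin⟩
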